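/- Transitivity for multiple-oracle Münchhausen provability without induction: if T is a Λ-Münchhausen theory with predicate [α]_T, then T ⊢ ∀α≺Λ ∀φ ( [α]_T φ → [α]_T [α]_T φ ). -/

import Mathlib

/-- An abstract arithmetical theory `T`: a type `S` of sentences, derivability
`Prov` (for `T ⊢ ·`), falsum and implication, a standard formalized
provability predicate `box` (for `□_T`), an internal representation `ltS` of
the ordering `≺` on (notations for) ordinals, and internal existential
quantifiers over formulas (`exF`), ordinal notations (`exO`), numbers
(`exN`), and finite sequences of (ordinal, formula) pairs (`exL`). -/
structure MFrame : Type 2 where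
  S : Type 1
  Prov : S → Prop
  bot : S
  imp : S → S → S
  box : S → S
  ltS : Ordinal.{0} → Ordinal.{0} → S
  exF : (S → S) → S
  exO : (Ordinal.{0} → S) → S
  exN : (ℕ → S) → S
  exL : (List (Ordinal.{0} × S) → S) → S

namespace MFrame

variable (F : MFrame)

def neg (a : F.S) : F.S := F.imp a F.bot
def top : F.S := F.neg F.bot
def and (a b : F.S) : F.S := F.neg (F.imp a (F.neg b))
def or (a b : F.S) : F.S := F.imp (F.neg a) b
def iff (a b : F.S) : F.S := F.and (F.imp a b) (F.imp b a)

/-- `⟨ξ⟩_T a := ¬[ξ]_T ¬a` for a candidate Münchhausen predicate `M`. -/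
def mdia (M : Ordinal.{0} → F.S → F.S) (ξ : Ordinal.{0}) (a : F.S) : F.S :=
  F.neg (M ξ (F.neg a))

/-- Basic conditions on the theory `T`: classical propositional logic via a
complete Hilbert basis with modus ponens, the Hilbert–Bernays derivability
conditions for `□_T`, introduction/elimination rules for the internal
existential quantifiers, and correctness of the internal ordering `≺`
(true facts `ξ ≺ ζ` are provable, false ones refutable, and `T` proves `≺`
transitive). -/
structure Basic (F : MFrame) : Prop where
  mp : ∀ {a b : F.S}, F.Prov (F.imp a b) → F.Prov a → F.Prov b
  ax1 : ∀ a b : F.S, F.Prov (F.imp a (F.imp b a))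
  ax2 : ∀ a b c : F.S,
    F.Prov (F.imp (F.imp a (F.imp b c)) (F.imp (F.imp a b) (F.imp a c)))
  ax3 : ∀ a b : F.S,
    F.Prov (F.imp (F.imp (F.neg a) (F.neg b)) (F.imp b a))
  nec : ∀ {a : F.S}, F.Prov a → F.Prov (F.box a)
  dist : ∀ a b : F.S,
    F.Prov (F.imp (F.box (F.imp a b)) (F.imp (F.box a) (F.box b)))
  d3 : ∀ a : F.S, F.Prov (F.imp (F.box a) (F.box (F.box a)))
  ltS_trans : ∀ ξ ζ η : Ordinal,
    F.Prov (F.imp (F.and (F.ltS ξ ζ) (F.ltS ζ η)) (F.ltS ξ η))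
  ltS_intro : ∀ {ξ ζ : Ordinal}, ξ < ζ → F.Prov (F.ltS ξ ζ)
  ltS_not : ∀ {ξ ζ : Ordinal}, ¬ ξ < ζ → F.Prov (F.neg (F.ltS ξ ζ))
  exF_intro : ∀ (G : F.S → F.S) (a : F.S), F.Prov (F.imp (G a) (F.exF G))
  exF_elim : ∀ (G : F.S → F.S) (c : F.S),
    (∀ a, F.Prov (F.imp (G a) c)) → F.Prov (F.imp (F.exF G) c)
  exO_intro : ∀ (G : Ordinal → F.S) (ξ : Ordinal), F.Prov (F.imp (G ξ) (F.exO G))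
  exO_elim : ∀ (G : Ordinal → F.S) (c : F.S),
    (∀ ξ, F.Prov (F.imp (G ξ) c)) → F.Prov (F.imp (F.exO G) c)
  exN_intro : ∀ (G : ℕ → F.S) (n : ℕ), F.Prov (F.imp (G n) (F.exN G))
  exN_elim : ∀ (G : ℕ → F.S) (c : F.S),
    (∀ n, F.Prov (F.imp (G n) c)) → F.Prov (F.imp (F.exN G) c)
  exL_intro : ∀ (G : List (Ordinal × F.S) → F.S) (ρ : List (Ordinal × F.S)),
    F.Prov (F.imp (G ρ) (F.exL G))
  exL_elim : ∀ (G : List (Ordinal × F.S) → F.S) (c : F.S),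
    (∀ ρ, F.Prov (F.imp (G ρ) c)) → F.Prov (F.imp (F.exL G) c)

/-- `T` is a single-oracle (one-)Münchhausen theory for `Λ`, with candidate
predicate `M ζ φ` (for `[ζ]_T φ`): `T` proves the defining recursion
`[ζ]φ ↔ □φ ∨ ∃ψ ∃ξ≺ζ (⟨ξ⟩ψ ∧ □(⟨ξ⟩ψ → φ))` for `ζ ≺ Λ`, proves
`ξ ≺ ζ → [ζ](ξ ≺ ζ)`, and proves that `0` is the `≺`-minimal element. -/
structure OneMunch (F : MFrame) (Λ : Ordinal.{0}) (M : Ordinal.{0} → F.S → F.S) : Prop where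
  recEq : ∀ ζ < Λ, ∀ φ : F.S,
    F.Prov (F.iff (M ζ φ)
      (F.or (F.box φ)
        (F.exF fun ψ => F.exO fun ξ =>
          F.and (F.ltS ξ ζ)
            (F.and (F.mdia M ξ ψ) (F.box (F.imp (F.mdia M ξ ψ) φ))))))
  ltS_box : ∀ {ξ ζ : Ordinal}, ξ < ζ →
    F.Prov (F.imp (F.ltS ξ ζ) (M ζ (F.ltS ξ ζ)))
  min_zero : ∀ ξ : Ordinal, F.Prov (F.neg (F.ltS ξ 0))

/-- The internal conjunction `⟨τ⟩_T σ` asserting of a finite sequence `ρ` of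
pairs (ordinal `τ_i`, formula `σ(i)`) that every `⟨τ_i⟩_T σ(i)` holds. -/
def listDia (M : Ordinal.{0} → F.S → F.S) (ρ : List (Ordinal.{0} × F.S)) : F.S :=
  ρ.foldr (fun p acc => F.and (F.mdia M p.1 p.2) acc) F.top

/-- The internal conjunction asserting `τ ≺ α`, i.e. every ordinal entry of
the sequence `ρ` is `≺ α`. -/
def listLt (ρ : List (Ordinal.{0} × F.S)) (α : Ordinal.{0}) : F.S :=
  ρ.foldr (fun p acc => F.and (F.ltS p.1 α) acc) F.top

/-- `T` is a (multiple-oracle) Münchhausen theory for `Λ` with candidate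
predicate `M α φ`: `T` proves the recursion
`[α]φ ↔ □φ ∨ ∃σ ∃τ≺α (⟨τ⟩σ ∧ □(⟨τ⟩σ → φ))`, where the internal existential
ranges over finite sequences `ρ` of pairs (which encodes the pair `σ, τ` of
equal-length sequences of formulas and of ordinals), together with
`ξ ≺ ζ → [ζ](ξ ≺ ζ)`. -/
structure MultiMunch (F : MFrame) (Λ : Ordinal.{0}) (M : Ordinal.{0} → F.S → F.S) : Prop where
  recEq : ∀ α < Λ, ∀ φ : F.S,
    F.Prov (F.iff (M α φ)
      (F.or (F.box φ)
        (F.exL fun ρ =>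
          F.and (F.listLt ρ α)
            (F.and (F.listDia M ρ) (F.box (F.imp (F.listDia M ρ) φ))))))
  ltS_box : ∀ {ξ ζ : Ordinal}, ξ < ζ →
    F.Prov (F.imp (F.ltS ξ ζ) (M ζ (F.ltS ξ ζ)))
  min_zero : ∀ ξ : Ordinal, F.Prov (F.neg (F.ltS ξ 0))

/-- Truth in the standard model: a predicate `Tr` making `T` sound, commuting
with the logical operations, with `Tr (□φ) ↔ T ⊢ φ` and with the internal
quantifiers and ordering evaluated standardly. -/
structure Truth (F : MFrame) (Tr : F.S → Prop) : Prop where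
  sound : ∀ a : F.S, F.Prov a → Tr a
  bot : ¬ Tr F.bot
  imp : ∀ a b : F.S, Tr (F.imp a b) ↔ (Tr a → Tr b)
  box : ∀ a : F.S, Tr (F.box a) ↔ F.Prov a
  ltS : ∀ ξ ζ : Ordinal, Tr (F.ltS ξ ζ) ↔ ξ < ζ
  exF : ∀ G : F.S → F.S, Tr (F.exF G) ↔ ∃ a, Tr (G a)
  exO : ∀ G : Ordinal → F.S, Tr (F.exO G) ↔ ∃ ξ, Tr (G ξ)
  exN : ∀ G : ℕ → F.S, Tr (F.exN G) ↔ ∃ n, Tr (G n)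
  exL : ∀ G : List (Ordinal × F.S) → F.S, Tr (F.exL G) ↔ ∃ ρ, Tr (G ρ)

end MFrame

namespace MFrame

/-- Auxiliary: derivations from a finite list of hypotheses. -/
inductive Der (F : MFrame) : List F.S → F.S → Prop
  | hyp {Γ a} : a ∈ Γ → Der F Γ a
  | prov {Γ a} : F.Prov a → Der F Γ a
  | mp {Γ a b} : Der F Γ (F.imp a b) → Der F Γ a → Der F Γ b

variable {F : MFrame}

theorem Der.weaken {Γ Γ' : List F.S} {a : F.S} (h : Der F Γ a)
    (hs : ∀ x ∈ Γ, x ∈ Γ') : Der F Γ' a := by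
  induction h generalizing Γ' with
  | hyp h => exact .hyp (hs _ h)
  | prov h => exact .prov h
  | mp _ _ ih1 ih2 => exact .mp (ih1 hs) (ih2 hs)

theorem Der.hyp0 {Γ : List F.S} {a : F.S} : Der F (a :: Γ) a :=
  .hyp List.mem_cons_self

theorem Der.hyp1 {Γ : List F.S} {a b : F.S} : Der F (b :: a :: Γ) a :=
  .hyp (List.mem_cons_of_mem _ List.mem_cons_self)

theorem Der.hyp2 {Γ : List F.S} {a b c : F.S} : Der F (c :: b :: a :: Γ) a :=
  .hyp (List.mem_cons_of_mem _ (List.mem_cons_of_mem _ List.mem_cons_self))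

theorem Der.wk {Γ : List F.S} {a b : F.S} (h : Der F Γ a) :
    Der F (b :: Γ) a :=
  h.weaken fun _ hx => List.mem_cons_of_mem _ hx

theorem prov_imp_refl (hF : F.Basic) (a : F.S) : F.Prov (F.imp a a) :=
  hF.mp (hF.mp (hF.ax2 a (F.imp a a) a) (hF.ax1 a (F.imp a a))) (hF.ax1 a a)

theorem Der.ded' (hF : F.Basic) {Δ : List F.S} {a : F.S} (h : Der F Δ a) :
    ∀ {b : F.S} {Γ : List F.S}, Δ = b :: Γ → Der F Γ (F.imp b a) := by
  induction h with
  | hyp hm =>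
    intro b Γ hΔ
    subst hΔ
    rcases List.mem_cons.1 hm with h | h
    · subst h; exact .prov (prov_imp_refl hF _)
    · exact .mp (.prov (hF.ax1 _ b)) (.hyp h)
  | prov h =>
    intro b Γ hΔ
    exact .mp (.prov (hF.ax1 _ b)) (.prov h)
  | mp _ _ ih1 ih2 =>
    intro b Γ hΔ
    exact .mp (.mp (.prov (hF.ax2 b _ _)) (ih1 hΔ)) (ih2 hΔ)

theorem Der.ded (hF : F.Basic) {Γ : List F.S} {b a : F.S}
    (h : Der F (b :: Γ) a) : Der F Γ (F.imp b a) :=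
  h.ded' hF rfl

theorem Der.run (hF : F.Basic) {a : F.S} (h : Der F [] a) : F.Prov a := by
  have : ∀ {Δ : List F.S} {a : F.S}, Der F Δ a → Δ = [] → F.Prov a := by
    intro Δ a h
    induction h with
    | hyp hm => intro hΔ; subst hΔ; exact absurd hm List.not_mem_nil
    | prov h => intro _; exact h
    | mp _ _ ih1 ih2 => intro hΔ; exact hF.mp (ih1 hΔ) (ih2 hΔ)
  exact this h rfl

theorem prov_efq (hF : F.Basic) (a : F.S) : F.Prov (F.imp F.bot a) :=
  hF.mp (hF.ax3 a F.bot)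
    (hF.mp (hF.ax1 (F.neg F.bot) (F.neg a)) (prov_imp_refl hF F.bot))

theorem prov_dni (hF : F.Basic) (a : F.S) : F.Prov (F.imp a (F.neg (F.neg a))) :=
  Der.run hF <| Der.ded hF <| Der.ded hF <|
    (Der.mp (a := a) (b := F.bot) Der.hyp0 Der.hyp1 :
      Der F [F.neg a, a] F.bot)

theorem prov_dne (hF : F.Basic) (a : F.S) : F.Prov (F.imp (F.neg (F.neg a)) a) :=
  hF.mp (hF.ax3 a (F.neg (F.neg a))) (prov_dni hF (F.neg a))

theorem Der.byContra (hF : F.Basic) {Γ : List F.S} {a : F.S}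
    (h : Der F (F.neg a :: Γ) F.bot) : Der F Γ a :=
  .mp (.prov (prov_dne hF a)) (h.ded hF)

theorem Der.andIntro (hF : F.Basic) {Γ : List F.S} {a b : F.S}
    (ha : Der F Γ a) (hb : Der F Γ b) : Der F Γ (F.and a b) :=
  Der.ded hF <|
    (Der.mp (a := b) (b := F.bot)
      (Der.mp (a := a) (b := F.neg b) Der.hyp0 ha.wk) hb.wk :
      Der F (F.imp a (F.neg b) :: Γ) F.bot)

theorem Der.andLeft (hF : F.Basic) {Γ : List F.S} {a b : F.S}
    (h : Der F Γ (F.and a b)) : Der F Γ a := by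
  refine Der.byContra hF (.mp (a := F.imp a (F.neg b)) h.wk ?_)
  refine Der.ded hF ?_
  exact .mp (.prov (prov_efq hF (F.neg b)))
    (Der.mp (a := a) (b := F.bot) Der.hyp1 Der.hyp0)

theorem Der.andRight (hF : F.Basic) {Γ : List F.S} {a b : F.S}
    (h : Der F Γ (F.and a b)) : Der F Γ b := by
  refine Der.byContra hF (.mp (a := F.imp a (F.neg b)) h.wk ?_)
  exact .mp (.prov (hF.ax1 (F.neg b) a)) Der.hyp0

theorem prov_and_left (hF : F.Basic) (a b : F.S) :
    F.Prov (F.imp (F.and a b) a) :=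
  Der.run hF <| Der.ded hF <| Der.andLeft hF Der.hyp0

theorem prov_and_right (hF : F.Basic) (a b : F.S) :
    F.Prov (F.imp (F.and a b) b) :=
  Der.run hF <| Der.ded hF <| Der.andRight hF Der.hyp0

theorem prov_imp_trans (hF : F.Basic) {a b c : F.S}
    (h1 : F.Prov (F.imp a b)) (h2 : F.Prov (F.imp b c)) :
    F.Prov (F.imp a c) :=
  Der.run hF <| Der.ded hF <| .mp (.prov h2) (.mp (.prov h1) Der.hyp0)

theorem prov_or_inl (hF : F.Basic) (a b : F.S) : F.Prov (F.imp a (F.or a b)) :=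
  Der.run hF <| Der.ded hF <| Der.ded hF <|
    (Der.mp (.prov (prov_efq hF b))
      (Der.mp (a := a) (b := F.bot) Der.hyp0 Der.hyp1) :
      Der F [F.neg a, a] b)

theorem prov_or_inr (hF : F.Basic) (a b : F.S) : F.Prov (F.imp b (F.or a b)) :=
  hF.ax1 b (F.neg a)

theorem prov_or_elim (hF : F.Basic) {a b c : F.S}
    (h1 : F.Prov (F.imp a c)) (h2 : F.Prov (F.imp b c)) :
    F.Prov (F.imp (F.or a b) c) := by
  refine Der.run hF <| Der.ded hF <| Der.byContra hF ?_
  have hna : Der F [F.neg c, F.or a b] (F.neg a) :=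
    Der.ded hF <|
      (Der.mp (a := c) (b := F.bot) Der.hyp1 (.mp (.prov h1) Der.hyp0) :
        Der F [a, F.neg c, F.or a b] F.bot)
  have hb : Der F [F.neg c, F.or a b] b :=
    Der.mp (a := F.neg a) Der.hyp1 hna
  exact Der.mp (a := c) (b := F.bot) Der.hyp0 (.mp (.prov h2) hb)

theorem prov_iff_mp (hF : F.Basic) {a b : F.S} (h : F.Prov (F.iff a b)) :
    F.Prov (F.imp a b) :=
  Der.run hF <| Der.andLeft hF (.prov h)

theorem prov_iff_mpr (hF : F.Basic) {a b : F.S} (h : F.Prov (F.iff a b)) :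
    F.Prov (F.imp b a) :=
  Der.run hF <| Der.andRight hF (.prov h)

theorem prov_box_mono (hF : F.Basic) {a b : F.S} (h : F.Prov (F.imp a b)) :
    F.Prov (F.imp (F.box a) (F.box b)) :=
  hF.mp (hF.dist a b) (hF.nec h)

theorem listLt_cons (q : Ordinal × F.S) (ρ : List (Ordinal × F.S))
    (α : Ordinal) :
    F.listLt (q :: ρ) α = F.and (F.ltS q.1 α) (F.listLt ρ α) := rfl

theorem prov_listLt_proj (hF : F.Basic) {ρ : List (Ordinal × F.S)}
    {p : Ordinal × F.S} (hp : p ∈ ρ) (α : Ordinal) :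
    F.Prov (F.imp (F.listLt ρ α) (F.ltS p.1 α)) := by
  induction ρ with
  | nil => exact absurd hp List.not_mem_nil
  | cons q ρ ih =>
    rw [listLt_cons]
    rcases List.mem_cons.1 hp with h | h
    · subst h; exact prov_and_left hF _ _
    · exact prov_imp_trans hF (prov_and_right hF _ _) (ih h)

theorem prov_listLt_intro (hF : F.Basic) {ρ : List (Ordinal × F.S)}
    {α : Ordinal} (h : ∀ p ∈ ρ, p.1 < α) : F.Prov (F.listLt ρ α) := by
  induction ρ with
  | nil => exact prov_imp_refl hF F.bot
  | cons q ρ ih =>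
    rw [listLt_cons]
    exact Der.run hF <| Der.andIntro hF
      (.prov (hF.ltS_intro (h q (by simp))))
      (.prov (ih fun p hp => h p (by simp [hp])))

end MFrame

/-- transitivity for multiple-oracle Münchhausen provability,
without induction: `T ⊢ [α]_T φ → [α]_T [α]_T φ` for `α ≺ Λ`. -/
theorem multiMunch_transitivity (F : MFrame) (hF : F.Basic)
    (Λ : Ordinal) (M : Ordinal → F.S → F.S) (hM : F.MultiMunch Λ M) :
    ∀ α < Λ, ∀ φ : F.S,
      F.Prov (F.imp (M α φ) (M α (M α φ))) := by
  intro α hα φ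
  open MFrame in
  -- the right-hand side of the recursion, and its two "introduction" forms
  have back_box : ∀ ψ : F.S, F.Prov (F.imp (F.box ψ) (M α ψ)) := fun ψ =>
    prov_imp_trans hF (prov_or_inl hF _ _) (prov_iff_mpr hF (hM.recEq α hα ψ))
  have back_wit : ∀ (ρ : List (Ordinal × F.S)) (ψ : F.S),
      F.Prov (F.imp
        (F.and (F.listLt ρ α)
          (F.and (F.listDia M ρ) (F.box (F.imp (F.listDia M ρ) ψ))))
        (M α ψ)) := fun ρ ψ =>
    prov_imp_trans hF
      (prov_imp_trans hF
        (hF.exL_intro (fun ρ =>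
          F.and (F.listLt ρ α)
            (F.and (F.listDia M ρ) (F.box (F.imp (F.listDia M ρ) ψ)))) ρ)
        (prov_or_inr hF _ _))
      (prov_iff_mpr hF (hM.recEq α hα ψ))
  -- case 1 : □φ → [α][α]φ
  have c1 : F.Prov (F.imp (F.box φ) (M α (M α φ))) :=
    prov_imp_trans hF (hF.d3 φ)
      (prov_imp_trans hF (prov_box_mono hF (back_box φ)) (back_box (M α φ)))
  -- case 2 : the existential witness case
  have c2 : ∀ ρ : List (Ordinal × F.S),
      F.Prov (F.imp
        (F.and (F.listLt ρ α)
          (F.and (F.listDia M ρ) (F.box (F.imp (F.listDia M ρ) φ))))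
        (M α (M α φ))) := by
    intro ρ
    by_cases hall : ∀ p ∈ ρ, p.1 < α
    · -- all ordinal entries are below α
      have hL : F.Prov (F.listLt ρ α) := prov_listLt_intro hF hall
      have inner : F.Prov (F.imp (F.box (F.imp (F.listDia M ρ) φ))
          (F.imp (F.listDia M ρ) (M α φ))) := by
        refine Der.run hF <| Der.ded hF <| Der.ded hF <|
          .mp (.prov (back_wit ρ φ)) ?_
        exact Der.andIntro hF (.prov hL)
          (Der.andIntro hF Der.hyp0 Der.hyp1)
      have key : F.Prov (F.imp (F.box (F.imp (F.listDia M ρ) φ))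
          (F.box (F.imp (F.listDia M ρ) (M α φ)))) :=
        prov_imp_trans hF (hF.d3 _) (prov_box_mono hF inner)
      refine Der.run hF <| Der.ded hF ?_
      have hC : Der F [F.and (F.listLt ρ α)
          (F.and (F.listDia M ρ) (F.box (F.imp (F.listDia M ρ) φ)))]
          (F.and (F.listLt ρ α)
            (F.and (F.listDia M ρ) (F.box (F.imp (F.listDia M ρ) φ)))) :=
        Der.hyp0
      have hrest := Der.andRight hF hC
      exact .mp (.prov (back_wit ρ (M α φ)))
        (Der.andIntro hF (Der.andLeft hF hC)
          (Der.andIntro hF (Der.andLeft hF hrest)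
            (.mp (.prov key) (Der.andRight hF hrest))))
    · -- some entry is not below α: the hypothesis is refutable
      push_neg at hall
      obtain ⟨p, hp, hpα⟩ := hall
      have hco : F.Prov (F.imp (F.listLt ρ α) F.bot) :=
        prov_imp_trans hF (prov_listLt_proj hF hp α) (hF.ltS_not (not_lt.2 hpα))
      refine Der.run hF <| Der.ded hF ?_
      have hC : Der F [F.and (F.listLt ρ α)
          (F.and (F.listDia M ρ) (F.box (F.imp (F.listDia M ρ) φ)))]
          (F.and (F.listLt ρ α)
            (F.and (F.listDia M ρ) (F.box (F.imp (F.listDia M ρ) φ)))) :=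
        Der.hyp0
      exact .mp (.prov (prov_efq hF _)) (.mp (.prov hco) (Der.andLeft hF hC))
  exact prov_imp_trans hF (prov_iff_mp hF (hM.recEq α hα φ))
    (prov_or_elim hF c1 (hF.exL_elim _ _ c2))
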